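/- arXiv:math/0002234 — 2 statements merged into one kernel-verified Lean document; each statement's English description precedes it below -/
import Mathlib

section
/- With the dilation V(λ) of the previous construction, for any unimodular λ₁, …, λₙ and h ∈ H (embedded as (…,0,0,h) ∈ K₊), the H-component of V(λ₁)⋯V(λₙ)h equals T(λ₁)⋯T(λₙ)h; hence V(λ) is a uniform dilation of T(λ): P_H V(λ₁)⋯V(λₙ)|_H = T(λ₁)⋯T(λₙ). -/
/-- With the canonical isometric dilation `V(λ)` on
`K₊ = (⊕_{n<0} Y) ⊕ H`, for any unimodular `λ₁, …, λₙ` and `h ∈ H` (embedded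
as `(…,0,0,h)`), the `H`-component of `V(λ₁)⋯V(λₙ)h` equals
`T(λ₁)⋯T(λₙ)h`; hence `V(λ)` is a uniform dilation of `T(λ)`. -/
theorem canonical_isometric_dilation_uniform
    {H Y : Type*} [NormedAddCommGroup H] [InnerProductSpace ℂ H] [CompleteSpace H]
    [NormedAddCommGroup Y] [InnerProductSpace ℂ Y] [CompleteSpace Y]
    (T₀ T₁ : H →L[ℂ] H) (F₀ F₁ : H →L[ℂ] Y)
    (hcontr : ∀ z : ℂ, ‖z‖ = 1 → ∀ h : H, ‖T₀ h + z • T₁ h‖ ≤ ‖h‖)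
    (hF : ∀ z : ℂ, ‖z‖ = 1 → ∀ h : H,
      ‖F₀ h + z • F₁ h‖ ^ 2 = ‖h‖ ^ 2 - ‖T₀ h + z • T₁ h‖ ^ 2)
    (V : ℂ → (WithLp 2 ((lp (fun _ : ℕ => Y) 2) × H)
      →L[ℂ] WithLp 2 ((lp (fun _ : ℕ => Y) 2) × H)))
    (hV : ∀ z : ℂ, ‖z‖ = 1 → ∀ (f : lp (fun _ : ℕ => Y) 2) (h : H),
      ((WithLp.equiv 2 _ (V z ((WithLp.equiv 2 _).symm (f, h)))).1 0 = F₀ h + z • F₁ h) ∧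
      (∀ n : ℕ, (WithLp.equiv 2 _ (V z ((WithLp.equiv 2 _).symm (f, h)))).1 (n + 1) = f n) ∧
      (WithLp.equiv 2 _ (V z ((WithLp.equiv 2 _).symm (f, h)))).2 = T₀ h + z • T₁ h) :
    ∀ l : List ℂ, (∀ z ∈ l, ‖z‖ = 1) → ∀ h : H,
      (WithLp.equiv 2 _ ((l.map V).prod ((WithLp.equiv 2 _).symm (0, h)))).2
        = (l.map (fun z => T₀ + z • T₁)).prod h := by
  intro l
  induction l with
  | nil => intro _ h; simp
  | cons z l ih =>
    intro hl h
    have hz : ‖z‖ = 1 := hl z List.mem_cons_self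
    have hl' : ∀ w ∈ l, ‖w‖ = 1 := fun w hw => hl w (List.mem_cons_of_mem z hw)
    simp only [List.map_cons, List.prod_cons, ContinuousLinearMap.mul_apply]
    set x := (l.map V).prod ((WithLp.equiv 2 _).symm (0, h)) with hx
    have hxeq : x = (WithLp.equiv 2 _).symm ((WithLp.equiv 2 _ x).1, (WithLp.equiv 2 _ x).2) := rfl
    have key := (hV z hz (WithLp.equiv 2 _ x).1 (WithLp.equiv 2 _ x).2).2.2
    rw [hxeq, key, ih hl' h]
    simp [ContinuousLinearMap.add_apply]
end

section
/- In ℓ²(ℤ_{≤0}, ℂ), define for unimodular λ the operator Ṽ(λ) whose action on the standard basis is: Ṽ(λ)e_{−n} = e_{−n−1} for n ≥ 3, Ṽ(λ)e_{−2} = (1/√2)e_{−3} + (1/√2)e_{−2}, Ṽ(λ)e_{−1} = (λ/√2)e_{−3} + (λ/√2)e_{0}, Ṽ(λ)e_{0} = (λ/√2)e_{−2} + (1/√2)e_{−1} (per the matrix in the paper). Then Ṽ(λ) is an isometry for each unimodular λ, and P_{ℂe₀}Ṽ(λ)ⁿe₀ = 0 for all n ≥ 1, yet P_{ℂe₀}Ṽ(−1)Ṽ(1)e₀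 = −e₀ ≠ 0. Hence Ṽ(λ) is an isometric dilation of the zero pencil T(λ) = 0 on ℂ which is not a uniform dilation. -/
open scoped ComplexConjugate

/-- The standard basis vector `e_{-n}` of `ℓ²(ℤ_{≤0}, ℂ)` (indexed by `ℕ`). -/
noncomputable def myS (n : ℕ) : lp (fun _ : ℕ => ℂ) 2 := lp.single 2 n (1 : ℂ)

lemma myS_apply (i j : ℕ) : (myS i : ∀ _ : ℕ, ℂ) j = if j = i then 1 else 0 := by
  simp [myS, lp.single_apply, eq_rec_constant, Pi.single_apply]

lemma inner_myS (i j : ℕ) : (inner ℂ (myS i) (myS j) : ℂ) = if i = j then 1 else 0 := by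
  rw [myS, myS, lp.inner_single_left]
  by_cases h : i = j
  · subst h; simp [lp.single_apply_self, RCLike.inner_apply]
  · rw [lp.single_apply_ne (E := fun _ : ℕ => ℂ) 2 j (1:ℂ) h]
    simp [RCLike.inner_apply, h]

lemma dense_myS (x : lp (fun _ : ℕ => ℂ) 2) :
    x ∈ closure ((Submodule.span ℂ (Set.range myS) :
      Submodule ℂ (lp (fun _ : ℕ => ℂ) 2)) : Set (lp (fun _ : ℕ => ℂ) 2)) := by
  have h := lp.hasSum_single ENNReal.ofNat_ne_top x
  refine mem_closure_of_tendsto h.tendsto_sum_nat (Filter.Eventually.of_forall fun n => ?_)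
  refine Submodule.sum_mem _ fun i _ => ?_
  have : lp.single 2 i (x i) = x i • myS i := by
    rw [myS, ← lp.single_smul, smul_eq_mul, mul_one]
  rw [this]
  exact Submodule.smul_mem _ _ (Submodule.subset_span ⟨i, rfl⟩)

lemma orth_myS (V : lp (fun _ : ℕ => ℂ) 2 →L[ℂ] lp (fun _ : ℕ => ℂ) 2) (z : ℂ) (hz : ‖z‖ = 1)
    (hs : ∀ n, 3 ≤ n → V (myS n) = myS (n+1))
    (h2 : V (myS 2) = ((Real.sqrt 2 : ℂ))⁻¹ • myS 3 - ((Real.sqrt 2 : ℂ))⁻¹ • myS 0)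
    (h1 : V (myS 1) = (z / (Real.sqrt 2 : ℂ)) • myS 3 + (z / (Real.sqrt 2 : ℂ)) • myS 0)
    (h0 : V (myS 0) = (z / (Real.sqrt 2 : ℂ)) • myS 2 + ((Real.sqrt 2 : ℂ))⁻¹ • myS 1) :
    ∀ i j, (inner ℂ (V (myS i)) (V (myS j)) : ℂ) = inner ℂ (myS i) (myS j) := by
  have hzz : (starRingEnd ℂ) z * z = 1 := by
    have h := Complex.mul_conj z
    rw [mul_comm] at h
    rw [h, Complex.normSq_eq_norm_sq, hz]
    norm_num
  have hrt : ((Real.sqrt 2 : ℝ) : ℂ) * ((Real.sqrt 2 : ℝ) : ℂ) = 2 := by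
    rw [← Complex.ofReal_mul, Real.mul_self_sqrt (by norm_num)]; norm_num
  have hrt0 : ((Real.sqrt 2 : ℝ) : ℂ) ≠ 0 := by
    simp [Real.sqrt_eq_zero']
  intro i j
  rcases Nat.lt_or_ge i 3 with hi | hi
  · rcases Nat.lt_or_ge j 3 with hj | hj
    · interval_cases i <;> interval_cases j <;>
        simp only [h0, h1, h2, inner_add_left, inner_add_right, inner_sub_left, inner_sub_right,
           inner_smul_left, inner_smul_right, inner_myS] <;>
        simp only [map_div₀, map_inv₀, Complex.conj_ofReal] <;>
        norm_num <;>
        field_simp <;>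
        first
           | linear_combination hzz - hrt
           | linear_combination 2*hzz - hrt
           | linear_combination -hrt
    · rw [hs j hj]
      have e0 : (0:ℕ) ≠ j+1 := by omega
      have e1 : (1:ℕ) ≠ j+1 := by omega
      have e2 : (2:ℕ) ≠ j+1 := by omega
      have e3 : (3:ℕ) ≠ j+1 := by omega
      have f0 : ¬((0:ℕ) = j) := by omega
      have f1 : ¬((1:ℕ) = j) := by omega
      have f2 : ¬((2:ℕ) = j) := by omega
      interval_cases i <;>
        (simp only [h0, h1, h2, inner_add_left, inner_sub_left, inner_smul_left, inner_myS,
           e0, e1, e2, e3, f0, f1, f2, if_false]; norm_num)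
  · rcases Nat.lt_or_ge j 3 with hj | hj
    · rw [hs i hi]
      have e0 : (i+1:ℕ) ≠ 0 := by omega
      have e1 : (i+1:ℕ) ≠ 1 := by omega
      have e2 : (i+1:ℕ) ≠ 2 := by omega
      have e3 : (i+1:ℕ) ≠ 3 := by omega
      have f0 : ¬(i = (0:ℕ)) := by omega
      have f1 : ¬(i = (1:ℕ)) := by omega
      have f2 : ¬(i = (2:ℕ)) := by omega
      interval_cases j <;>
        (simp only [h0, h1, h2, inner_add_right, inner_sub_right, inner_smul_right, inner_myS,
           e0, e1, e2, e3, f0, f1, f2, if_false]; norm_num)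
    · rw [hs i hi, hs j hj, inner_myS, inner_myS]
      by_cases h : i = j
      · simp [h]
      · simp [h, show i + 1 ≠ j + 1 by omega]

lemma isom_myS (V : lp (fun _ : ℕ => ℂ) 2 →L[ℂ] lp (fun _ : ℕ => ℂ) 2)
    (horth : ∀ i j, (inner ℂ (V (myS i)) (V (myS j)) : ℂ) = inner ℂ (myS i) (myS j)) :
    ∀ x, ‖V x‖ = ‖x‖ := by
  have step1 : ∀ (j : ℕ) (x : lp (fun _ : ℕ => ℂ) 2),
      (inner ℂ (V x) (V (myS j)) : ℂ) = inner ℂ x (myS j) := by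
    intro j x
    have hcl : IsClosed {x : lp (fun _ : ℕ => ℂ) 2 |
        (inner ℂ (V x) (V (myS j)) : ℂ) = inner ℂ x (myS j)} :=
      isClosed_eq (Continuous.inner V.continuous continuous_const)
        (Continuous.inner continuous_id continuous_const)
    have hsub : ((Submodule.span ℂ (Set.range myS) :
        Submodule ℂ (lp (fun _ : ℕ => ℂ) 2)) : Set (lp (fun _ : ℕ => ℂ) 2)) ⊆
        {x | (inner ℂ (V x) (V (myS j)) : ℂ) = inner ℂ x (myS j)} := by
      intro y hy
      induction hy using Submodule.span_induction with
      | mem y hy => obtain ⟨i, rfl⟩ := hy; exact horth i j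
      | zero => simp
      | add a b _ _ ha hb => simp only [map_add, inner_add_left, Set.mem_setOf_eq] at *; rw [ha, hb]
      | smul c a _ ha => simp only [map_smul, inner_smul_left, Set.mem_setOf_eq] at *; rw [ha]
    exact closure_minimal hsub hcl (dense_myS x)
  have step2 : ∀ (x y : lp (fun _ : ℕ => ℂ) 2), (inner ℂ (V x) (V y) : ℂ) = inner ℂ x y := by
    intro x y
    have hcl : IsClosed {y : lp (fun _ : ℕ => ℂ) 2 |
        (inner ℂ (V x) (V y) : ℂ) = inner ℂ x y} :=
      isClosed_eq (Continuous.inner continuous_const V.continuous)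
        (Continuous.inner continuous_const continuous_id)
    have hsub : ((Submodule.span ℂ (Set.range myS) :
        Submodule ℂ (lp (fun _ : ℕ => ℂ) 2)) : Set (lp (fun _ : ℕ => ℂ) 2)) ⊆
        {y | (inner ℂ (V x) (V y) : ℂ) = inner ℂ x y} := by
      intro w hw
      induction hw using Submodule.span_induction with
      | mem w hw => obtain ⟨i, rfl⟩ := hw; exact step1 i x
      | zero => simp
      | add a b _ _ ha hb => simp only [map_add, inner_add_right, Set.mem_setOf_eq] at *; rw [ha, hb]
      | smul c a _ ha => simp only [map_smul, inner_smul_right, Set.mem_setOf_eq] at *; rw [ha]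
    exact closure_minimal hsub hcl (dense_myS y)
  intro x
  rw [norm_eq_sqrt_re_inner (𝕜 := ℂ), norm_eq_sqrt_re_inner (𝕜 := ℂ) x, step2 x x]

/-- The paper's example of a non-uniform minimal isometric dilation of the zero
pencil on `ℂ`: in `ℓ²(ℤ_{≤0}, ℂ)` (indexed here by `ℕ`, with `e n`
corresponding to `e_{−n}`), define `Ṽ(λ)` by
`Ṽ(λ)e_{−n} = e_{−n−1}` for `n ≥ 3`,
`Ṽ(λ)e_{−2} = (1/√2)e_{−3} − (1/√2)e_0`,
`Ṽ(λ)e_{−1} = (λ/√2)e_{−3} + (λ/√2)e_0`,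
`Ṽ(λ)e_0 = (λ/√2)e_{−2} + (1/√2)e_{−1}` (per the matrix in the paper).
Then each `Ṽ(λ)` is an isometry and `P_{ℂe₀}Ṽ(λ)ⁿe₀ = 0` for all `n ≥ 1`
(so `Ṽ` is an isometric dilation of the zero pencil), yet
`P_{ℂe₀}Ṽ(−1)Ṽ(1)e₀ = −e₀ ≠ 0`, so the dilation is not uniform. -/
theorem nonuniform_minimal_isometric_dilation_example
    (W : ℂ → (lp (fun _ : ℕ => ℂ) 2 →L[ℂ] lp (fun _ : ℕ => ℂ) 2))
    (hshift : ∀ z : ℂ, ‖z‖ = 1 → ∀ n : ℕ, 3 ≤ n →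
      W z (lp.single 2 n (1 : ℂ)) = lp.single 2 (n + 1) (1 : ℂ))
    (h2 : ∀ z : ℂ, ‖z‖ = 1 →
      W z (lp.single 2 2 (1 : ℂ))
        = ((Real.sqrt 2 : ℂ))⁻¹ • lp.single 2 3 (1 : ℂ)
          - ((Real.sqrt 2 : ℂ))⁻¹ • lp.single 2 0 (1 : ℂ))
    (h1 : ∀ z : ℂ, ‖z‖ = 1 →
      W z (lp.single 2 1 (1 : ℂ))
        = (z / (Real.sqrt 2 : ℂ)) • lp.single 2 3 (1 : ℂ)
          + (z / (Real.sqrt 2 : ℂ)) • lp.single 2 0 (1 : ℂ))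
    (h0 : ∀ z : ℂ, ‖z‖ = 1 →
      W z (lp.single 2 0 (1 : ℂ))
        = (z / (Real.sqrt 2 : ℂ)) • lp.single 2 2 (1 : ℂ)
          + ((Real.sqrt 2 : ℂ))⁻¹ • lp.single 2 1 (1 : ℂ)) :
    (∀ z : ℂ, ‖z‖ = 1 →
      (∀ x, ‖W z x‖ = ‖x‖) ∧
      (∀ n : ℕ, 1 ≤ n → ((W z ^ n) (lp.single 2 0 (1 : ℂ))) 0 = 0)) ∧
    ((W (-1)) ((W 1) (lp.single 2 0 (1 : ℂ)))) 0 = -1 := by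
  have hrt : ((Real.sqrt 2 : ℝ) : ℂ) * ((Real.sqrt 2 : ℝ) : ℂ) = 2 := by
    rw [← Complex.ofReal_mul, Real.mul_self_sqrt (by norm_num)]; norm_num
  have hrt0 : ((Real.sqrt 2 : ℝ) : ℂ) ≠ 0 := by simp [Real.sqrt_eq_zero']
  constructor
  · intro z hz
    have hs' : ∀ n, 3 ≤ n → W z (myS n) = myS (n+1) := fun n hn => hshift z hz n hn
    have h2' : W z (myS 2) = ((Real.sqrt 2 : ℂ))⁻¹ • myS 3 - ((Real.sqrt 2 : ℂ))⁻¹ • myS 0 :=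
      h2 z hz
    have h1' : W z (myS 1) = (z / (Real.sqrt 2 : ℂ)) • myS 3 + (z / (Real.sqrt 2 : ℂ)) • myS 0 :=
      h1 z hz
    have h0' : W z (myS 0) = (z / (Real.sqrt 2 : ℂ)) • myS 2 + ((Real.sqrt 2 : ℂ))⁻¹ • myS 1 :=
      h0 z hz
    refine ⟨isom_myS (W z) (orth_myS (W z) z hz hs' h2' h1' h0'), ?_⟩
    have hWsq : W z (W z (myS 0)) = z • myS 3 := by
      rw [h0', map_add, map_smul, map_smul, h1', h2']
      rw [smul_sub, smul_add]
      rw [smul_smul, smul_smul, smul_smul, smul_smul]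
      rw [sub_eq_add_neg, ← neg_smul]
      rw [add_add_add_comm, ← add_smul, ← add_smul]
      have c3 : z / (Real.sqrt 2 : ℂ) * ((Real.sqrt 2 : ℂ))⁻¹
          + ((Real.sqrt 2 : ℂ))⁻¹ * (z / (Real.sqrt 2 : ℂ)) = z := by
        field_simp
        linear_combination (-z) * hrt
      have c0 : -(z / (Real.sqrt 2 : ℂ) * ((Real.sqrt 2 : ℂ))⁻¹)
          + ((Real.sqrt 2 : ℂ))⁻¹ * (z / (Real.sqrt 2 : ℂ)) = 0 := by
        ring
      rw [c3, c0, zero_smul, add_zero]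
    have key : ∀ m : ℕ, (W z ^ (m + 2)) (myS 0) = z • myS (m + 3) := by
      intro m
      induction m with
      | zero =>
        have : (W z ^ 2) (myS 0) = W z (W z (myS 0)) := by
          rw [pow_two, ContinuousLinearMap.mul_apply]
        rw [this, hWsq]
      | succ m ih =>
        have : (W z ^ (m + 1 + 2)) (myS 0) = W z ((W z ^ (m + 2)) (myS 0)) := by
          rw [show m + 1 + 2 = (m + 2) + 1 by ring, pow_succ']
          rw [ContinuousLinearMap.mul_apply]
        rw [this, ih, map_smul, hs' (m + 3) (by omega)]
    intro n hn
    match n, hn with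
    | 1, _ =>
      rw [pow_one]
      show (W z (myS 0) : ∀ _ : ℕ, ℂ) 0 = 0
      rw [h0']
      rw [lp.coeFn_add, lp.coeFn_smul, lp.coeFn_smul]
      simp [myS_apply]
    | (m + 2), _ =>
      show ((W z ^ (m + 2)) (myS 0) : ∀ _ : ℕ, ℂ) 0 = 0
      rw [key m, lp.coeFn_smul]
      simp [myS_apply]
  · have hz1 : ‖(1 : ℂ)‖ = 1 := norm_one
    have hzm1 : ‖(-1 : ℂ)‖ = 1 := by rw [norm_neg, norm_one]
    show ((W (-1)) ((W 1) (myS 0)) : ∀ _ : ℕ, ℂ) 0 = -1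
    have h0' : W 1 (myS 0) = ((1 : ℂ) / (Real.sqrt 2 : ℂ)) • myS 2 + ((Real.sqrt 2 : ℂ))⁻¹ • myS 1 :=
      h0 1 hz1
    have h2' : W (-1) (myS 2) = ((Real.sqrt 2 : ℂ))⁻¹ • myS 3 - ((Real.sqrt 2 : ℂ))⁻¹ • myS 0 :=
      h2 (-1) hzm1
    have h1' : W (-1) (myS 1) = ((-1 : ℂ) / (Real.sqrt 2 : ℂ)) • myS 3
        + ((-1 : ℂ) / (Real.sqrt 2 : ℂ)) • myS 0 := h1 (-1) hzm1
    rw [h0', map_add, map_smul, map_smul, h1', h2']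
    rw [lp.coeFn_add, lp.coeFn_smul, lp.coeFn_smul, lp.coeFn_sub, lp.coeFn_add,
      lp.coeFn_smul, lp.coeFn_smul, lp.coeFn_smul, lp.coeFn_smul]
    simp only [Pi.add_apply, Pi.sub_apply, Pi.smul_apply, myS_apply, smul_eq_mul]
    norm_num
    field_simp
    linear_combination hrt
end
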